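/- Let v : ℝ → ℝ^{h̄} be a vector whose r-th component is either sin(ν_r t) or cos(ν_r t), where all ν_r > 0, the frequencies of the sine-type components are pairwise distinct, and the frequencies of the cosine-type components are pairwise distinct (so that the components form a linearly independent orthogonal functional system). Let M ∈ ℝ^{h×h̄} with rank(M) = h, and let ε₁, ε₂ : [0, ∞) → ℝ^h be continuous and bounded with ε₂(t) → 0 as t → ∞. Then there exists ε̄₀ > 0 (depending only on M and v) such that whenever ‖ε₁(t)‖₂ ≤ ε̄ for all t ≥ 0 with ε̄ ≤ ε̄₀, the signal σ(t) = M·(d/dt)v(t) + ε₁(t) + ε₂(t) satisfies the averaged PE condition for some constants α', T' > 0. -/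

import Mathlib

open MeasureTheory

/-- `σ` satisfies the averaged PE condition with constants `αI, T`:
for all `t ≥ 0` and every unit vector `ι`, `(1/T)·∫_t^{t+T} |σ(τ)ᵀι| dτ ≥ αI`. -/
def AvgPE {h : ℕ} (σ : ℝ → Fin h → ℝ) (αI T : ℝ) : Prop :=
  ∀ t ≥ (0 : ℝ), ∀ ι : Fin h → ℝ, (∑ i, ι i ^ 2) = 1 →
    αI ≤ (1 / T) * ∫ τ in t..(t + T), |∑ i, σ τ i * ι i|

open intervalIntegral Real
-- helper: integral of cos(c τ) bounded
lemma intC_bound (c t T : ℝ) (hc : c ≠ 0) :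
    |∫ τ in t..t+T, Real.cos (c*τ)| ≤ 2/|c| := by
  rw [intervalIntegral.integral_comp_mul_left _ hc, integral_cos, smul_eq_mul]
  rw [abs_mul, abs_inv]
  rw [div_eq_mul_inv, mul_comm (2:ℝ)]
  refine mul_le_mul_of_nonneg_left ?_ (by positivity)
  · exact (abs_sub _ _).trans (by
      have := Real.abs_sin_le_one (c*(t+T)); have := Real.abs_sin_le_one (c*t); linarith)

lemma intS_bound (c t T : ℝ) (hc : c ≠ 0) :
    |∫ τ in t..t+T, Real.sin (c*τ)| ≤ 2/|c| := by
  rw [intervalIntegral.integral_comp_mul_left _ hc, integral_sin, smul_eq_mul]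
  rw [abs_mul, abs_inv, div_eq_mul_inv, mul_comm (2:ℝ)]
  refine mul_le_mul_of_nonneg_left ?_ (by positivity)
  · exact (abs_sub _ _).trans (by
      have := Real.abs_cos_le_one (c*(t+T)); have := Real.abs_cos_le_one (c*t); linarith)

noncomputable def Ks (c : ℝ) : ℝ := if c = 0 then 0 else 2/|c|

lemma Ks_nonneg (c : ℝ) : 0 ≤ Ks c := by
  unfold Ks; split <;> positivity

lemma intS_bound' (c t T : ℝ) : |∫ τ in t..t+T, Real.sin (c*τ)| ≤ Ks c := by
  unfold Ks; split
  · next hc => simp [hc]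
  · next hc => exact intS_bound c t T hc

lemma intC_ii (c t T : ℝ) : IntervalIntegrable (fun τ => Real.cos (c*τ)) volume t (t+T) :=
  (Real.continuous_cos.comp (continuous_const.mul continuous_id)).intervalIntegrable _ _

lemma intS_ii (c t T : ℝ) : IntervalIntegrable (fun τ => Real.sin (c*τ)) volume t (t+T) :=
  (Real.continuous_sin.comp (continuous_const.mul continuous_id)).intervalIntegrable _ _

lemma combo_cos (c₁ c₂ e₁ e₂ t T : ℝ) (h1 : e₁ ≠ 0) (h2 : e₂ ≠ 0) :
    |∫ τ in t..t+T, (c₁ * Real.cos (e₁*τ) + c₂ * Real.cos (e₂*τ))| ≤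
      |c₁| *(2/|e₁|) + |c₂| *(2/|e₂|) := by
  rw [intervalIntegral.integral_add ((intC_ii e₁ t T).const_mul c₁)
    ((intC_ii e₂ t T).const_mul c₂), intervalIntegral.integral_const_mul,
    intervalIntegral.integral_const_mul]
  refine (abs_add_le _ _).trans ?_
  rw [abs_mul, abs_mul]
  gcongr
  · exact intC_bound e₁ t T h1
  · exact intC_bound e₂ t T h2

lemma combo_sin (c₁ c₂ e₁ e₂ t T : ℝ) :
    |∫ τ in t..t+T, (c₁ * Real.sin (e₁*τ) + c₂ * Real.sin (e₂*τ))| ≤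
      |c₁|  * Ks e₁ + |c₂|  * Ks e₂ := by
  rw [intervalIntegral.integral_add ((intS_ii e₁ t T).const_mul c₁)
    ((intS_ii e₂ t T).const_mul c₂), intervalIntegral.integral_const_mul,
    intervalIntegral.integral_const_mul]
  refine (abs_add_le _ _).trans ?_
  rw [abs_mul, abs_mul]
  gcongr
  · exact intS_bound' e₁ t T
  · exact intS_bound' e₂ t T

lemma combo_diag (k c₂ e₂ t T : ℝ) (h2 : e₂ ≠ 0) :
    |(∫ τ in t..t+T, (k + c₂ * Real.cos (e₂*τ))) - k*T| ≤ |c₂| *(2/|e₂|) := by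
  rw [intervalIntegral.integral_add (intervalIntegrable_const)
    ((intC_ii e₂ t T).const_mul c₂), intervalIntegral.integral_const_mul,
    intervalIntegral.integral_const, smul_eq_mul]
  set I := ∫ τ in t..t+T, Real.cos (e₂*τ) with hI
  rw [show (t + T - t) * k + c₂ * I - k*T = c₂ * I by ring, abs_mul]
  gcongr
  exact intC_bound e₂ t T h2

noncomputable def dd {hbar : ℕ} (S : Finset (Fin hbar)) (ν : Fin hbar → ℝ)
    (r : Fin hbar) (τ : ℝ) : ℝ :=
  if r ∈ S then ν r * Real.cos (ν r * τ) else -(ν r * Real.sin (ν r * τ))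

lemma dd_cont {hbar : ℕ} (S : Finset (Fin hbar)) (ν : Fin hbar → ℝ) (r : Fin hbar) :
    Continuous (dd S ν r) := by
  unfold dd; split
  · exact continuous_const.mul (Real.continuous_cos.comp (continuous_const.mul continuous_id))
  · exact (continuous_const.mul (Real.continuous_sin.comp (continuous_const.mul continuous_id))).neg

lemma dd_abs_le {hbar : ℕ} (S : Finset (Fin hbar)) (ν : Fin hbar → ℝ)
    (hν : ∀ r, 0 < ν r) (r : Fin hbar) (τ : ℝ) : |dd S ν r τ| ≤ ν r := by
  unfold dd; split
  · rw [abs_mul, abs_of_pos (hν r)]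
    exact mul_le_of_le_one_right (hν r).le (Real.abs_cos_le_one _)
  · rw [abs_neg, abs_mul, abs_of_pos (hν r)]
    exact mul_le_of_le_one_right (hν r).le (Real.abs_sin_le_one _)

lemma pair_bound {hbar : ℕ} (S : Finset (Fin hbar)) (ν : Fin hbar → ℝ)
    (hνpos : ∀ r, 0 < ν r)
    (hdist : ∀ r r' : Fin hbar, r ≠ r' → ((r ∈ S) ↔ (r' ∈ S)) → ν r ≠ ν r')
    (r r' : Fin hbar) :
    ∃ K : ℝ, 0 ≤ K ∧ ∀ t T : ℝ,
      |(∫ τ in t..t+T, dd S ν r τ * dd S ν r' τ)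
        - (if r = r' then ν r ^ 2 * T / 2 else 0)| ≤ K := by
  set a := ν r with ha
  set b := ν r' with hb
  have hab : a + b ≠ 0 := by have := hνpos r; have := hνpos r'; positivity
  have hcc : ∀ x y : ℝ, Real.cos x * Real.cos y
      = Real.cos (x - y)/2 + Real.cos (x + y)/2 := by
    intro x y; rw [Real.cos_sub, Real.cos_add]; ring
  have hss : ∀ x y : ℝ, Real.sin x * Real.sin y
      = Real.cos (x - y)/2 - Real.cos (x + y)/2 := by
    intro x y; rw [Real.cos_sub, Real.cos_add]; ring
  have hcs : ∀ x y : ℝ, Real.cos x * Real.sin y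
      = Real.sin (x + y)/2 - Real.sin (x - y)/2 := by
    intro x y; rw [Real.sin_sub, Real.sin_add]; ring
  by_cases hrr : r = r'
  · -- diagonal
    subst hrr
    simp only [if_pos rfl]
    refine ⟨|a*a/2| * (2/|2*a|), by positivity, fun t T => ?_⟩
    have h2a : (2:ℝ)*a ≠ 0 := by have := hνpos r; rw [ha]; positivity
    by_cases hrS : r ∈ S
    · have key : ∀ τ : ℝ, dd S ν r τ * dd S ν r τ
          = a*a/2 + (a*a/2) * Real.cos ((2*a)*τ) := by
        intro τ
        simp only [dd, if_pos hrS, ← ha]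
        have h1 := hcc (a*τ) (a*τ)
        calc (a * Real.cos (a*τ)) * (a * Real.cos (a*τ))
            = a*a*(Real.cos (a*τ) * Real.cos (a*τ)) := by ring
          _ = a*a*(Real.cos (a*τ - a*τ)/2 + Real.cos (a*τ + a*τ)/2) := by rw [h1]
          _ = a*a/2 + (a*a/2) * Real.cos ((2*a)*τ) := by
              rw [sub_self, Real.cos_zero, show a*τ + a*τ = (2*a)*τ by ring]; ring
      rw [intervalIntegral.integral_congr (g := fun τ => a*a/2 + (a*a/2) * Real.cos ((2*a)*τ))
        (fun τ _ => key τ)]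
      have h := combo_diag (a*a/2) (a*a/2) (2*a) t T h2a
      rw [show a ^ 2 * T / 2 = (a*a/2)*T by ring]
      exact h
    · have key : ∀ τ : ℝ, dd S ν r τ * dd S ν r τ
          = a*a/2 + (-(a*a/2)) * Real.cos ((2*a)*τ) := by
        intro τ
        simp only [dd, if_neg hrS, ← ha]
        have h1 := hss (a*τ) (a*τ)
        calc (-(a * Real.sin (a*τ))) * (-(a * Real.sin (a*τ)))
            = a*a*(Real.sin (a*τ) * Real.sin (a*τ)) := by ring
          _ = a*a*(Real.cos (a*τ - a*τ)/2 - Real.cos (a*τ + a*τ)/2) := by rw [h1]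
          _ = a*a/2 + (-(a*a/2)) * Real.cos ((2*a)*τ) := by
              rw [sub_self, Real.cos_zero, show a*τ + a*τ = (2*a)*τ by ring]; ring
      rw [intervalIntegral.integral_congr (g := fun τ => a*a/2 + (-(a*a/2)) * Real.cos ((2*a)*τ))
        (fun τ _ => key τ)]
      have h := combo_diag (a*a/2) (-(a*a/2)) (2*a) t T h2a
      rw [show a ^ 2 * T / 2 = (a*a/2)*T by ring]
      rwa [abs_neg] at h
  · -- off-diagonal
    simp only [if_neg hrr]
    by_cases hrS : r ∈ S <;> by_cases hr'S : r' ∈ S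
    · -- cos * cos, a ≠ b
      have hne : a ≠ b := hdist r r' hrr (by simp [hrS, hr'S])
      have hsub : a - b ≠ 0 := sub_ne_zero.2 hne
      refine ⟨|a*b/2| * (2/|a-b|) + |a*b/2| * (2/|a+b|), by positivity, fun t T => ?_⟩
      have key : ∀ τ : ℝ, dd S ν r τ * dd S ν r' τ
          = (a*b/2) * Real.cos ((a-b)*τ) + (a*b/2) * Real.cos ((a+b)*τ) := by
        intro τ
        simp only [dd, if_pos hrS, if_pos hr'S, ← ha, ← hb]
        calc (a * Real.cos (a*τ)) * (b * Real.cos (b*τ))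
            = a*b*(Real.cos (a*τ) * Real.cos (b*τ)) := by ring
          _ = a*b*(Real.cos (a*τ - b*τ)/2 + Real.cos (a*τ + b*τ)/2) := by rw [hcc]
          _ = (a*b/2) * Real.cos ((a-b)*τ) + (a*b/2) * Real.cos ((a+b)*τ) := by
              rw [show a*τ - b*τ = (a-b)*τ by ring, show a*τ + b*τ = (a+b)*τ by ring]; ring
      rw [intervalIntegral.integral_congr
        (g := fun τ => (a*b/2) * Real.cos ((a-b)*τ) + (a*b/2) * Real.cos ((a+b)*τ))
        (fun τ _ => key τ), sub_zero]
      exact combo_cos _ _ _ _ t T hsub hab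
    · -- cos * (-sin)
      refine ⟨|(-(a*b/2))| * Ks (a+b) + |a*b/2| * Ks (a-b),
        add_nonneg (mul_nonneg (abs_nonneg _) (Ks_nonneg _)) (mul_nonneg (abs_nonneg _) (Ks_nonneg _)), fun t T => ?_⟩
      have key : ∀ τ : ℝ, dd S ν r τ * dd S ν r' τ
          = (-(a*b/2)) * Real.sin ((a+b)*τ) + (a*b/2) * Real.sin ((a-b)*τ) := by
        intro τ
        simp only [dd, if_pos hrS, if_neg hr'S, ← ha, ← hb]
        calc (a * Real.cos (a*τ)) * (-(b * Real.sin (b*τ)))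
            = -(a*b)*(Real.cos (a*τ) * Real.sin (b*τ)) := by ring
          _ = -(a*b)*(Real.sin (a*τ + b*τ)/2 - Real.sin (a*τ - b*τ)/2) := by rw [hcs]
          _ = (-(a*b/2)) * Real.sin ((a+b)*τ) + (a*b/2) * Real.sin ((a-b)*τ) := by
              rw [show a*τ - b*τ = (a-b)*τ by ring, show a*τ + b*τ = (a+b)*τ by ring]; ring
      rw [intervalIntegral.integral_congr
        (g := fun τ => (-(a*b/2)) * Real.sin ((a+b)*τ) + (a*b/2) * Real.sin ((a-b)*τ))
        (fun τ _ => key τ), sub_zero]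
      exact combo_sin _ _ _ _ t T
    · -- (-sin) * cos
      refine ⟨|(-(a*b/2))| * Ks (a+b) + |a*b/2| * Ks (b-a),
        add_nonneg (mul_nonneg (abs_nonneg _) (Ks_nonneg _)) (mul_nonneg (abs_nonneg _) (Ks_nonneg _)), fun t T => ?_⟩
      have key : ∀ τ : ℝ, dd S ν r τ * dd S ν r' τ
          = (-(a*b/2)) * Real.sin ((a+b)*τ) + (a*b/2) * Real.sin ((b-a)*τ) := by
        intro τ
        simp only [dd, if_neg hrS, if_pos hr'S, ← ha, ← hb]
        calc (-(a * Real.sin (a*τ))) * (b * Real.cos (b*τ))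
            = -(a*b)*(Real.cos (b*τ) * Real.sin (a*τ)) := by ring
          _ = -(a*b)*(Real.sin (b*τ + a*τ)/2 - Real.sin (b*τ - a*τ)/2) := by rw [hcs]
          _ = (-(a*b/2)) * Real.sin ((a+b)*τ) + (a*b/2) * Real.sin ((b-a)*τ) := by
              rw [show b*τ - a*τ = (b-a)*τ by ring, show b*τ + a*τ = (a+b)*τ by ring]; ring
      rw [intervalIntegral.integral_congr
        (g := fun τ => (-(a*b/2)) * Real.sin ((a+b)*τ) + (a*b/2) * Real.sin ((b-a)*τ))
        (fun τ _ => key τ), sub_zero]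
      exact combo_sin _ _ _ _ t T
    · -- sin * sin, a ≠ b
      have hne : a ≠ b := hdist r r' hrr (by simp [hrS, hr'S])
      have hsub : a - b ≠ 0 := sub_ne_zero.2 hne
      refine ⟨|a*b/2| * (2/|a-b|) + |(-(a*b/2))| * (2/|a+b|), by positivity, fun t T => ?_⟩
      have key : ∀ τ : ℝ, dd S ν r τ * dd S ν r' τ
          = (a*b/2) * Real.cos ((a-b)*τ) + (-(a*b/2)) * Real.cos ((a+b)*τ) := by
        intro τ
        simp only [dd, if_neg hrS, if_neg hr'S, ← ha, ← hb]
        calc (-(a * Real.sin (a*τ))) * (-(b * Real.sin (b*τ)))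
            = a*b*(Real.sin (a*τ) * Real.sin (b*τ)) := by ring
          _ = a*b*(Real.cos (a*τ - b*τ)/2 - Real.cos (a*τ + b*τ)/2) := by rw [hss]
          _ = (a*b/2) * Real.cos ((a-b)*τ) + (-(a*b/2)) * Real.cos ((a+b)*τ) := by
              rw [show a*τ - b*τ = (a-b)*τ by ring, show a*τ + b*τ = (a+b)*τ by ring]; ring
      rw [intervalIntegral.integral_congr
        (g := fun τ => (a*b/2) * Real.cos ((a-b)*τ) + (-(a*b/2)) * Real.cos ((a+b)*τ))
        (fun τ _ => key τ), sub_zero]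
      exact combo_cos _ _ _ _ t T hsub hab

lemma sphere_min {h hbar : ℕ} (hh : 1 ≤ h) (M : Matrix (Fin h) (Fin hbar) ℝ)
    (hM : M.rank = h) :
    ∃ m : ℝ, 0 < m ∧ ∀ ι : Fin h → ℝ, (∑ i, ι i ^ 2) = 1 →
      m ≤ ∑ r, (∑ i, M i r * ι i) ^ 2 := by
  -- injectivity of ι ↦ M.transpose ι
  have hinj : Function.Injective (Matrix.mulVecLin M.transpose) := by
    rw [← LinearMap.ker_eq_bot]
    have hr : M.transpose.rank = h := by rw [Matrix.rank_transpose]; exact hM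
    have hfin := LinearMap.finrank_range_add_finrank_ker (Matrix.mulVecLin M.transpose)
    rw [Module.finrank_pi, Fintype.card_fin] at hfin
    have : Module.finrank ℝ (LinearMap.ker (Matrix.mulVecLin M.transpose)) = 0 := by
      have : Module.finrank ℝ (LinearMap.range (Matrix.mulVecLin M.transpose)) = h := hr
      omega
    exact Submodule.finrank_eq_zero.mp this
  set φ : (Fin h → ℝ) → ℝ := fun ι => ∑ r, (∑ i, M i r * ι i) ^ 2 with hφ
  have hφc : Continuous φ := by
    apply continuous_finset_sum
    intro r _
    exact (continuous_finset_sum _ fun i _ => (continuous_const.mul (continuous_apply i))).pow 2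
  set Sp : Set (Fin h → ℝ) := {ι | (∑ i, ι i ^ 2) = 1} with hSp
  have hclosed : IsClosed Sp :=
    isClosed_eq (continuous_finset_sum _ fun i _ => (continuous_apply i).pow 2) continuous_const
  have hbd : Sp ⊆ Metric.closedBall 0 1 := by
    intro ι hι
    rw [Metric.mem_closedBall, dist_zero_right]
    rw [pi_norm_le_iff_of_nonneg (by norm_num)]
    intro i
    rw [Real.norm_eq_abs, ← Real.sqrt_one, ← Real.sqrt_sq_eq_abs]
    apply Real.sqrt_le_sqrt
    rw [← hι]
    exact Finset.single_le_sum (f := fun j => ι j ^ 2) (fun j _ => sq_nonneg _) (Finset.mem_univ i)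
  have hcompact : IsCompact Sp :=
    Metric.isCompact_of_isClosed_isBounded hclosed
      ((Metric.isBounded_closedBall (x := (0 : Fin h → ℝ)) (r := 1)).subset hbd)
  have hne : Sp.Nonempty := by
    refine ⟨fun i => if i = ⟨0, hh⟩ then 1 else 0, ?_⟩
    simp only [hSp, Set.mem_setOf_eq]
    rw [Finset.sum_eq_single ⟨0, hh⟩]
    · simp
    · intro j _ hj; simp [hj]
    · intro hj; exact absurd (Finset.mem_univ _) hj
  obtain ⟨x, hxSp, hxmin'⟩ := hcompact.exists_isMinOn hne hφc.continuousOn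
  have hxmin : ∀ ι ∈ Sp, φ x ≤ φ ι := fun ι hι => hxmin' hι
  refine ⟨φ x, ?_, fun ι hι => hxmin ι hι⟩
  rcases lt_or_eq_of_le (Finset.sum_nonneg fun r _ => sq_nonneg ((∑ i, M i r * x i))) with hlt | heq
  · exact hlt
  · exfalso
    have hzero : ∀ r, (∑ i, M i r * x i) = 0 := by
      intro r
      have := (Finset.sum_eq_zero_iff_of_nonneg (fun r _ => sq_nonneg ((∑ i, M i r * x i)))).mp
        heq.symm r (Finset.mem_univ r)
      exact pow_eq_zero_iff two_ne_zero |>.mp this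
    have hx0 : x = 0 := by
      apply hinj
      rw [map_zero]
      funext r
      rw [Matrix.mulVecLin_apply, Matrix.mulVec, dotProduct]
      simp only [Matrix.transpose_apply]
      simpa using hzero r
    rw [hSp] at hxSp
    simp only [Set.mem_setOf_eq, hx0] at hxSp
    simp at hxSp

lemma cs_bound {n : ℕ} (x y : Fin n → ℝ) (hy : (∑ i, y i ^ 2) = 1) :
    |∑ i, x i * y i| ≤ Real.sqrt (∑ i, x i ^ 2) := by
  rw [← Real.sqrt_sq_eq_abs]
  apply Real.sqrt_le_sqrt
  calc (∑ i, x i * y i) ^ 2 ≤ (∑ i, x i ^ 2) * ∑ i, y i ^ 2 :=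
        Finset.sum_mul_sq_le_sq_mul_sq _ _ _
    _ = ∑ i, x i ^ 2 := by rw [hy, mul_one]

lemma deriv_trig {hbar : ℕ} (S : Finset (Fin hbar)) (ν : Fin hbar → ℝ) (r : Fin hbar) (τ : ℝ) :
    deriv (fun s => if r ∈ S then Real.sin (ν r * s) else Real.cos (ν r * s)) τ
      = dd S ν r τ := by
  have hlin : HasDerivAt (fun s : ℝ => ν r * s) (ν r) τ := by
    simpa using (hasDerivAt_id τ).const_mul (ν r)
  by_cases hr : r ∈ S
  · simp only [if_pos hr, dd]
    have h1 : HasDerivAt (fun s : ℝ => Real.sin (ν r * s)) (Real.cos (ν r * τ) * ν r) τ :=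
      (Real.hasDerivAt_sin (ν r * τ)).comp τ hlin
    rw [h1.deriv]; ring
  · simp only [if_neg hr, dd]
    have h1 : HasDerivAt (fun s : ℝ => Real.cos (ν r * s)) (-Real.sin (ν r * τ) * ν r) τ :=
      (Real.hasDerivAt_cos (ν r * τ)).comp τ hlin
    rw [h1.deriv]; ring

/-- Lemma 8 of the paper, made concrete: let `v : ℝ → ℝ^h̄` have
components `sin(ν_r t)` (for `r ∈ S`) or `cos(ν_r t)` (for `r ∉ S`) with positive
frequencies, pairwise distinct within each type, and let `M` have full row rank.
Then there is a margin `ε̄₀ > 0`, depending only on `M` and `v`, such that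
`σ = M·(d/dt)v + ε₁ + ε₂` satisfies the averaged PE condition whenever
`‖ε₁(t)‖₂ ≤ ε̄ ≤ ε̄₀` and `ε₂` is a vanishing bounded transient. -/
theorem stmt_9 (h hbar : ℕ) (hh : 1 ≤ h)
    (S : Finset (Fin hbar)) (ν : Fin hbar → ℝ) (hνpos : ∀ r, 0 < ν r)
    (hdist : ∀ r r' : Fin hbar, r ≠ r' → ((r ∈ S) ↔ (r' ∈ S)) → ν r ≠ ν r')
    (M : Matrix (Fin h) (Fin hbar) ℝ) (hM : M.rank = h) :
    ∃ εbar₀ : ℝ, 0 < εbar₀ ∧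
      ∀ ε₁ ε₂ : ℝ → Fin h → ℝ,
        ContinuousOn ε₁ (Set.Ici 0) → ContinuousOn ε₂ (Set.Ici 0) →
        (∃ C : ℝ, ∀ t ≥ (0 : ℝ), ∀ i, |ε₁ t i| ≤ C) →
        (∃ C : ℝ, ∀ t ≥ (0 : ℝ), ∀ i, |ε₂ t i| ≤ C) →
        Filter.Tendsto (fun t => Real.sqrt (∑ i, ε₂ t i ^ 2)) Filter.atTop (nhds 0) →
        ∀ εbar : ℝ, εbar ≤ εbar₀ →
          (∀ t ≥ (0 : ℝ), Real.sqrt (∑ i, ε₁ t i ^ 2) ≤ εbar) →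
          ∃ α' T' : ℝ, 0 < α' ∧ 0 < T' ∧
            AvgPE (fun t i =>
              M.mulVec (fun r =>
                deriv (fun s => if r ∈ S then Real.sin (ν r * s) else Real.cos (ν r * s)) t) i
              + ε₁ t i + ε₂ t i) α' T' := by
  obtain ⟨m, hm, hmin⟩ := sphere_min hh M hM
  choose K hK0 hKb using pair_bound S ν hνpos hdist
  have hbar1 : 1 ≤ hbar := by
    have h0 := M.rank_le_card_width
    rw [hM, Fintype.card_fin] at h0; omega
  have hFinNe : (Finset.univ : Finset (Fin hbar)).Nonempty := ⟨⟨0, hbar1⟩, Finset.mem_univ _⟩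
  set νmin := Finset.univ.inf' hFinNe ν with hνmindef
  set νmax := Finset.univ.sup' hFinNe ν with hνmaxdef
  have hνminle : ∀ r, νmin ≤ ν r := fun r => Finset.inf'_le _ (Finset.mem_univ r)
  have hνmaxle : ∀ r, ν r ≤ νmax := fun r => Finset.le_sup' _ (Finset.mem_univ r)
  have hνmin : 0 < νmin := by
    obtain ⟨r, _, hr⟩ := Finset.exists_mem_eq_inf' hFinNe ν
    rw [hνmindef, hr]; exact hνpos r
  have hνmax : 0 < νmax := hνmin.trans_le ((hνminle ⟨0, hbar1⟩).trans (hνmaxle ⟨0, hbar1⟩))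
  set CM := ∑ r : Fin hbar, ∑ i : Fin h, |M i r| with hCMdef
  have hCM0 : 0 ≤ CM :=
    Finset.sum_nonneg fun r _ => Finset.sum_nonneg fun i _ => abs_nonneg _
  set KT := ∑ r : Fin hbar, ∑ r' : Fin hbar, K r r' with hKTdef
  have hKT0 : 0 ≤ KT :=
    Finset.sum_nonneg fun r _ => Finset.sum_nonneg fun r' _ => hK0 _ _
  have hKle : ∀ r r', K r r' ≤ KT := by
    intro r r'
    calc K r r' ≤ ∑ r'', K r r'' :=
          Finset.single_le_sum (fun j _ => hK0 r j) (Finset.mem_univ r')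
      _ ≤ KT :=
          Finset.single_le_sum (f := fun ρ => ∑ r'', K ρ r'')
            (fun ρ _ => Finset.sum_nonneg fun j _ => hK0 ρ j) (Finset.mem_univ r)
  set c₀ := Real.sqrt (m / hbar) with hc₀def
  have hbne : (0:ℝ) < hbar := by exact_mod_cast hbar1
  have hc₀ : 0 < c₀ := Real.sqrt_pos.2 (div_pos hm hbne)
  set α₀ := c₀ * νmin ^ 2 / (4 * νmax) with hα₀def
  have hα₀ : 0 < α₀ := by positivity
  set T₀ := max 1 ((4 * (CM * KT + 1)) / (c₀ * νmin ^ 2)) with hT₀def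
  have hT₀1 : (1:ℝ) ≤ T₀ := le_max_left _ _
  have hT₀ : (0:ℝ) < T₀ := lt_of_lt_of_le one_pos hT₀1
  have hT₀K : CM * KT ≤ c₀ * νmin ^ 2 * T₀ / 4 := by
    have h1 : (4 * (CM * KT + 1)) / (c₀ * νmin ^ 2) ≤ T₀ := le_max_right _ _
    rw [div_le_iff₀ (by positivity)] at h1
    nlinarith
  refine ⟨α₀ / 4, by positivity, ?_⟩
  intro ε₁ ε₂ hε₁c hε₂c _hb₁ _hb₂ htend εbar hεbar hε₁
  set δ := α₀ / 4 with hδdef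
  have hδpos : 0 < δ := by positivity
  obtain ⟨t₁', ht₁'⟩ :=
    (Filter.eventually_atTop).1 (htend.eventually (eventually_le_nhds hδpos))
  set t₁ := max t₁' 0 with ht₁def
  have ht₁0 : (0:ℝ) ≤ t₁ := le_max_right _ _
  have hε₂small : ∀ τ ≥ t₁, Real.sqrt (∑ i, ε₂ τ i ^ 2) ≤ δ := fun τ hτ =>
    ht₁' τ ((le_max_left _ _).trans hτ)
  refine ⟨(α₀ / 2) * T₀ / (t₁ + T₀), t₁ + T₀, by positivity, by positivity, ?_⟩
  intro t ht ι hι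
  set cv : Fin hbar → ℝ := fun r => ∑ i, M i r * ι i with hcv
  have hcvdef : ∀ r, cv r = ∑ i, M i r * ι i := fun r => rfl
  set f : ℝ → ℝ := fun τ => ∑ r, cv r * dd S ν r τ with hfdef
  have hfd : ∀ τ, f τ = ∑ r, cv r * dd S ν r τ := fun τ => rfl
  have hfcont : Continuous f :=
    continuous_finset_sum _ fun r _ => continuous_const.mul (dd_cont S ν r)
  have hι1 : ∀ i, |ι i| ≤ 1 := by
    intro i
    rw [← Real.sqrt_one, ← Real.sqrt_sq_eq_abs]
    apply Real.sqrt_le_sqrt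
    rw [← hι]
    exact Finset.single_le_sum (f := fun j => ι j ^ 2) (fun j _ => sq_nonneg _)
      (Finset.mem_univ i)
  have hcvb : ∀ r, |cv r| ≤ ∑ i, |M i r| := by
    intro r
    rw [hcvdef]
    refine (Finset.abs_sum_le_sum_abs _ _).trans ?_
    apply Finset.sum_le_sum; intro i _
    rw [abs_mul]
    exact mul_le_of_le_one_right (abs_nonneg _) (hι1 i)
  have hident : ∀ τ : ℝ,
      (∑ i, ((M.mulVec fun r =>
          deriv (fun s => if r ∈ S then Real.sin (ν r * s) else Real.cos (ν r * s)) τ) i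
          + ε₁ τ i + ε₂ τ i) * ι i)
      = f τ + (∑ i, ε₁ τ i * ι i) + (∑ i, ε₂ τ i * ι i) := by
    intro τ
    have hw : (fun r =>
        deriv (fun s => if r ∈ S then Real.sin (ν r * s) else Real.cos (ν r * s)) τ)
        = fun r => dd S ν r τ := funext fun r => deriv_trig S ν r τ
    rw [hw]
    simp only [add_mul, Finset.sum_add_distrib]
    congr 1
    congr 1
    calc ∑ i, (M.mulVec fun r => dd S ν r τ) i * ι i
        = ∑ i, ∑ r, M i r * dd S ν r τ * ι i := by
          apply Finset.sum_congr rfl; intro i _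
          rw [Matrix.mulVec, dotProduct, Finset.sum_mul]
      _ = ∑ r, ∑ i, M i r * dd S ν r τ * ι i := Finset.sum_comm
      _ = f τ := by
          rw [hfd]
          apply Finset.sum_congr rfl; intro r _
          rw [hcvdef, Finset.sum_mul]
          apply Finset.sum_congr rfl; intro i _; ring
  have he₁ : ∀ τ ≥ (0:ℝ), |∑ i, ε₁ τ i * ι i| ≤ εbar := fun τ hτ =>
    (cs_bound _ _ hι).trans (hε₁ τ hτ)
  have he₂ : ∀ τ ≥ t₁, |∑ i, ε₂ τ i * ι i| ≤ δ := fun τ hτ =>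
    (cs_bound _ _ hι).trans (hε₂small τ hτ)
  -- nominal window bound
  have hnom : ∀ s : ℝ, α₀ * T₀ ≤ ∫ τ in s..s + T₀, |f τ| := by
    intro s
    have hsle : s ≤ s + T₀ := by linarith
    have hsum : m ≤ ∑ r, cv r ^ 2 := hmin ι hι
    have hex : ∃ r₀ ∈ Finset.univ, m / hbar ≤ cv r₀ ^ 2 := by
      apply Finset.exists_le_of_sum_le hFinNe
      rw [Finset.sum_const, Finset.card_univ, Fintype.card_fin, nsmul_eq_mul]
      rw [show (hbar : ℝ) * (m / hbar) = m by field_simp]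
      exact hsum
    obtain ⟨r₀, _, hr₀⟩ := hex
    have hcr₀ : c₀ ≤ |cv r₀| := by
      rw [hc₀def, ← Real.sqrt_sq_eq_abs]
      exact Real.sqrt_le_sqrt hr₀
    have hIdec : (∫ τ in s..s + T₀, f τ * dd S ν r₀ τ)
        = ∑ r, cv r * ∫ τ in s..s + T₀, dd S ν r τ * dd S ν r₀ τ := by
      rw [intervalIntegral.integral_congr
        (g := fun τ => ∑ r, cv r * (dd S ν r τ * dd S ν r₀ τ))
        (fun τ _ => by
          rw [hfd, Finset.sum_mul]
          exact Finset.sum_congr rfl fun r _ => by ring)]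
      rw [intervalIntegral.integral_finset_sum (f := fun r τ => cv r * (dd S ν r τ * dd S ν r₀ τ))
        (fun r _ =>
        (((dd_cont S ν r).mul (dd_cont S ν r₀)).intervalIntegrable _ _).const_mul (cv r))]
      exact Finset.sum_congr rfl fun r _ => intervalIntegral.integral_const_mul _ _
    have hEbound : |(∑ r, cv r * ∫ τ in s..s + T₀, dd S ν r τ * dd S ν r₀ τ)
        - cv r₀ * (ν r₀ ^ 2 * T₀ / 2)| ≤ CM * KT := by
      have step : (∑ r, cv r * ∫ τ in s..s + T₀, dd S ν r τ * dd S ν r₀ τ)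
          - cv r₀ * (ν r₀ ^ 2 * T₀ / 2)
          = ∑ r, cv r * ((∫ τ in s..s + T₀, dd S ν r τ * dd S ν r₀ τ)
              - (if r = r₀ then ν r ^ 2 * T₀ / 2 else 0)) := by
        have hterm : ∀ r, cv r * ((∫ τ in s..s + T₀, dd S ν r τ * dd S ν r₀ τ)
            - (if r = r₀ then ν r ^ 2 * T₀ / 2 else 0))
            = cv r * (∫ τ in s..s + T₀, dd S ν r τ * dd S ν r₀ τ)
              - (if r = r₀ then cv r * (ν r ^ 2 * T₀ / 2) else 0) := by
          intro r; split <;> ring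
        rw [Finset.sum_congr rfl fun r _ => hterm r, Finset.sum_sub_distrib,
          Finset.sum_ite_eq' Finset.univ r₀ (fun r => cv r * (ν r ^ 2 * T₀ / 2)),
          if_pos (Finset.mem_univ r₀)]
      rw [step]
      refine (Finset.abs_sum_le_sum_abs _ _).trans ?_
      calc ∑ r, |cv r * ((∫ τ in s..s + T₀, dd S ν r τ * dd S ν r₀ τ)
              - (if r = r₀ then ν r ^ 2 * T₀ / 2 else 0))|
          ≤ ∑ r, (∑ i, |M i r|) * KT := by
            apply Finset.sum_le_sum; intro r _
            rw [abs_mul]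
            exact mul_le_mul (hcvb r) ((hKb r r₀ s T₀).trans (hKle r r₀))
              (abs_nonneg _) (Finset.sum_nonneg fun i _ => abs_nonneg _)
        _ = CM * KT := by rw [hCMdef, Finset.sum_mul]
    -- main lower bound on |∫ f · d_{r₀}|
    have hmain : c₀ * νmin ^ 2 * T₀ / 4 ≤ |∫ τ in s..s + T₀, f τ * dd S ν r₀ τ| := by
      rw [hIdec]
      have h5 : c₀ * νmin ^ 2 * T₀ / 2 ≤ |cv r₀ * (ν r₀ ^ 2 * T₀ / 2)| := by
        rw [abs_mul, abs_of_nonneg (show (0:ℝ) ≤ ν r₀ ^ 2 * T₀ / 2 by positivity)]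
        have h6 : νmin ^ 2 ≤ ν r₀ ^ 2 := by
          apply pow_le_pow_left₀ hνmin.le (hνminle r₀)
        have h9 : c₀ * νmin ^ 2 ≤ |cv r₀| * ν r₀ ^ 2 :=
          mul_le_mul hcr₀ h6 (by positivity) (abs_nonneg _)
        linarith [mul_le_mul_of_nonneg_right h9 hT₀.le]
      have h7 := abs_sub_abs_le_abs_sub (cv r₀ * (ν r₀ ^ 2 * T₀ / 2))
        (∑ r, cv r * ∫ τ in s..s + T₀, dd S ν r τ * dd S ν r₀ τ)
      rw [abs_sub_comm] at h7
      linarith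
    -- compare with ∫ |f|
    have hstep : |∫ τ in s..s + T₀, f τ * dd S ν r₀ τ|
        ≤ ν r₀ * ∫ τ in s..s + T₀, |f τ| := by
      refine (intervalIntegral.abs_integral_le_integral_abs hsle).trans ?_
      rw [← intervalIntegral.integral_const_mul]
      apply intervalIntegral.integral_mono_on hsle
        ((hfcont.mul (dd_cont S ν r₀)).abs.intervalIntegrable _ _)
        ((continuous_const.mul hfcont.abs).intervalIntegrable _ _)
      intro x _
      calc |f x * dd S ν r₀ x| = |f x| * |dd S ν r₀ x| := abs_mul _ _
        _ ≤ |f x| * ν r₀ := mul_le_mul_of_nonneg_left (dd_abs_le S ν hνpos r₀ x) (abs_nonneg _)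
        _ = ν r₀ * |f x| := mul_comm _ _
    have hintf0 : 0 ≤ ∫ τ in s..s + T₀, |f τ| :=
      intervalIntegral.integral_nonneg hsle fun x _ => abs_nonneg _
    have hfin : c₀ * νmin ^ 2 * T₀ / 4 ≤ νmax * ∫ τ in s..s + T₀, |f τ| := by
      have h8 : ν r₀ * (∫ τ in s..s + T₀, |f τ|) ≤ νmax * ∫ τ in s..s + T₀, |f τ| :=
        mul_le_mul_of_nonneg_right (hνmaxle r₀) hintf0
      linarith [hmain.trans hstep]
    have hid : νmax * (α₀ * T₀) = c₀ * νmin ^ 2 * T₀ / 4 := by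
      rw [hα₀def]; field_simp
    have h10 : νmax * (α₀ * T₀) ≤ νmax * ∫ τ in s..s + T₀, |f τ| := by
      rw [hid]; exact hfin
    exact (mul_le_mul_iff_right₀ hνmax).mp h10
  -- the perturbed integrand
  set G : ℝ → ℝ := fun τ => |f τ + (∑ i, ε₁ τ i * ι i) + (∑ i, ε₂ τ i * ι i)| with hGdef
  have hGd : ∀ τ, G τ = |f τ + (∑ i, ε₁ τ i * ι i) + (∑ i, ε₂ τ i * ι i)| := fun τ => rfl
  have he₁cont : ContinuousOn (fun τ => ∑ i, ε₁ τ i * ι i) (Set.Ici (0:ℝ)) := by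
    apply continuousOn_finset_sum
    intro i _
    exact ((continuous_apply i).comp_continuousOn hε₁c).mul continuousOn_const
  have he₂cont : ContinuousOn (fun τ => ∑ i, ε₂ τ i * ι i) (Set.Ici (0:ℝ)) := by
    apply continuousOn_finset_sum
    intro i _
    exact ((continuous_apply i).comp_continuousOn hε₂c).mul continuousOn_const
  have hGcont : ContinuousOn G (Set.Ici 0) :=
    ((hfcont.continuousOn.add he₁cont).add he₂cont).abs
  have hGint : ∀ a b : ℝ, 0 ≤ a → a ≤ b → IntervalIntegrable G volume a b := by
    intro a b ha hab
    apply (hGcont.mono ?_).intervalIntegrable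
    rw [Set.uIcc_of_le hab]
    intro x hx
    exact ha.trans hx.1
  have hG0 : ∀ x, 0 ≤ G x := fun x => (hGd x) ▸ abs_nonneg _
  -- window estimate for the perturbed signal
  have hwin : ∀ s : ℝ, t₁ ≤ s → (α₀ / 2) * T₀ ≤ ∫ τ in s..s + T₀, G τ := by
    intro s hs
    have hs0 : (0:ℝ) ≤ s := ht₁0.trans hs
    have hsle : s ≤ s + T₀ := by linarith
    have hlow : ∀ x ∈ Set.Icc s (s + T₀), |f x| - (εbar + δ) ≤ G x := by
      intro x hx
      have hx0 : (0:ℝ) ≤ x := hs0.trans hx.1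
      have h1 := he₁ x hx0
      have h2 := he₂ x (hs.trans hx.1)
      have h3 : |f x| ≤ G x + |∑ i, ε₁ x i * ι i| + |∑ i, ε₂ x i * ι i| := by
        rw [hGd]
        have e4 : |f x + (∑ i, ε₁ x i * ι i) + (∑ i, ε₂ x i * ι i) - (∑ i, ε₂ x i * ι i)|
            ≤ |f x + (∑ i, ε₁ x i * ι i) + (∑ i, ε₂ x i * ι i)| + |∑ i, ε₂ x i * ι i| :=
          abs_sub _ _
        have e5 : |f x + (∑ i, ε₁ x i * ι i)|
            ≤ |f x + (∑ i, ε₁ x i * ι i) + (∑ i, ε₂ x i * ι i) - (∑ i, ε₂ x i * ι i)|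
              + 0 := by
          rw [add_zero, show f x + (∑ i, ε₁ x i * ι i) + (∑ i, ε₂ x i * ι i)
            - (∑ i, ε₂ x i * ι i) = f x + (∑ i, ε₁ x i * ι i) by ring]
        have e6 : |f x| ≤ |f x + (∑ i, ε₁ x i * ι i)| + |∑ i, ε₁ x i * ι i| := by
          have := abs_sub (f x + (∑ i, ε₁ x i * ι i)) (∑ i, ε₁ x i * ι i)
          rw [show f x + (∑ i, ε₁ x i * ι i) - (∑ i, ε₁ x i * ι i) = f x by ring] at this
          exact this
        linarith
      linarith
    have hmono : ∫ τ in s..s + T₀, (|f τ| - (εbar + δ)) ≤ ∫ τ in s..s + T₀, G τ :=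
      intervalIntegral.integral_mono_on hsle
        ((hfcont.abs.sub continuous_const).intervalIntegrable _ _)
        (hGint s (s + T₀) hs0 hsle) hlow
    have hcalc : ∫ τ in s..s + T₀, (|f τ| - (εbar + δ))
        = (∫ τ in s..s + T₀, |f τ|) - (εbar + δ) * T₀ := by
      rw [intervalIntegral.integral_sub (hfcont.abs.intervalIntegrable _ _)
        intervalIntegrable_const, intervalIntegral.integral_const, smul_eq_mul,
        show s + T₀ - s = T₀ by ring]
      ring
    have hnoms := hnom s
    have hsmall : εbar + δ ≤ α₀ / 2 := by
      rw [hδdef] at hεbar ⊢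
      linarith
    have hmul : (εbar + δ) * T₀ ≤ (α₀ / 2) * T₀ :=
      mul_le_mul_of_nonneg_right hsmall hT₀.le
    rw [hcalc] at hmono
    have : α₀ * T₀ - (α₀ / 2) * T₀ = (α₀ / 2) * T₀ := by ring
    linarith
  -- assemble over the full interval [t, t + (t₁ + T₀)]
  have ht2 : t ≤ t + t₁ := by linarith
  have ht3 : t + t₁ ≤ t + (t₁ + T₀) := by linarith
  have hsplit := intervalIntegral.integral_add_adjacent_intervals
    (hGint t (t + t₁) ht ht2)
    (hGint (t + t₁) (t + (t₁ + T₀)) (by linarith) ht3)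
  have h1 : 0 ≤ ∫ τ in t..t + t₁, G τ :=
    intervalIntegral.integral_nonneg ht2 fun x _ => hG0 x
  have h2 : (α₀ / 2) * T₀ ≤ ∫ τ in (t + t₁)..(t + t₁) + T₀, G τ := hwin (t + t₁) (by linarith)
  rw [show (t + t₁) + T₀ = t + (t₁ + T₀) by ring] at h2
  have hIeq : (∫ τ in t..t + (t₁ + T₀),
      |∑ i, ((M.mulVec fun r =>
          deriv (fun s => if r ∈ S then Real.sin (ν r * s) else Real.cos (ν r * s)) τ) i
          + ε₁ τ i + ε₂ τ i) * ι i|)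
      = ∫ τ in t..t + (t₁ + T₀), G τ :=
    intervalIntegral.integral_congr fun τ _ => by rw [hGd, hident τ]
  have hTpos : (0:ℝ) < t₁ + T₀ := by linarith
  have hfinal : (α₀ / 2) * T₀ ≤ ∫ τ in t..t + (t₁ + T₀), G τ := by
    rw [← hsplit]
    linarith
  calc (α₀ / 2) * T₀ / (t₁ + T₀) = 1 / (t₁ + T₀) * ((α₀ / 2) * T₀) := by ring
    _ ≤ 1 / (t₁ + T₀) * ∫ τ in t..t + (t₁ + T₀), G τ :=
        mul_le_mul_of_nonneg_left hfinal (by positivity)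
    _ = 1 / (t₁ + T₀) * ∫ τ in t..t + (t₁ + T₀),
        |∑ i, ((M.mulVec fun r =>
            deriv (fun s => if r ∈ S then Real.sin (ν r * s) else Real.cos (ν r * s)) τ) i
            + ε₁ τ i + ε₂ τ i) * ι i| := by rw [hIeq]
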